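/- (Coxeter presentation of the symmetric group, type A_n) Let n ≥ 1 and define m_{ij} for 1 ≤ i, j ≤ n by m_{ii} = 1, m_{ij} = 3 if |i − j| = 1, and m_{ij} = 2 if |i − j| ≥ 2. Then the group presented by generators s_1, …, s_n subject to the relations (s_i s_j)^{m_{ij}} = 1 is isomorphic to the symmetric group S_{n+1}, via the isomorphism induced by sending s_i to the adjacent transposition (i, i+1). -/

import Mathlib

open CoxeterMatrix CoxeterSystem Equiv Function

namespace Stmt11

noncomputable section

/-- The canonical Coxeter system of type `Aₙ`. -/
def cs (m : ℕ) : CoxeterSystem (Aₙ m) (Aₙ m).Group := (Aₙ m).toCoxeterSystem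

lemma cs_simple (m : ℕ) (i : Fin m) : (cs m).simple i = (Aₙ m).simple i := by
  rw [cs, toCoxeterSystem_simple]

lemma A_apply (N : ℕ) (i j : Fin N) : (Aₙ N) i j =
    if i = j then 1 else if (j : ℕ) + 1 = (i : ℕ) ∨ (i : ℕ) + 1 = (j : ℕ) then 3 else 2 := rfl

lemma simple_pow (m : ℕ) (i j : Fin m) :
    ((Aₙ m).simple i * (Aₙ m).simple j) ^ ((Aₙ m) i j) = 1 := by
  have := (cs m).simple_mul_simple_pow i j
  rwa [cs_simple, cs_simple] at this

/-- Simple reflections of `Group (A_{m+1})` indexed by naturals, extended by `1`. -/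
def σ (m x : ℕ) : (Aₙ (m+1)).Group :=
  if h : x ≤ m then (Aₙ (m+1)).simple ⟨x, Nat.lt_succ_of_le h⟩ else 1

lemma σ_sq (m x : ℕ) : σ m x * σ m x = 1 := by
  unfold σ
  split
  · have := simple_pow (m+1) ⟨x, by omega⟩ ⟨x, by omega⟩
    rwa [A_apply, if_pos rfl, pow_one] at this
  · simp

lemma σ_inv (m x : ℕ) : (σ m x)⁻¹ = σ m x :=
  inv_eq_of_mul_eq_one_right (σ_sq m x)

lemma σ_braid (m x : ℕ) (h : x + 1 ≤ m) :
    σ m x * σ m (x+1) * σ m x = σ m (x+1) * σ m x * σ m (x+1) := by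
  set a := σ m x with ha
  set b := σ m (x+1) with hb
  have h3 : (a * b) ^ 3 = 1 := by
    rw [ha, hb]
    unfold σ
    rw [dif_pos (by omega : x ≤ m), dif_pos (by omega : x + 1 ≤ m)]
    have := simple_pow (m+1) ⟨x, by omega⟩ ⟨x+1, by omega⟩
    rwa [A_apply, if_neg (by simp [Fin.ext_iff]), if_pos (by simp)] at this
  have key : (a * b * a) * (b * a * b) = 1 := by
    calc (a * b * a) * (b * a * b) = (a*b)^3 := by rw [pow_succ, pow_two]; group
    _ = 1 := h3
  have := inv_eq_of_mul_eq_one_right key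
  rw [← this]
  rw [mul_inv_rev, mul_inv_rev, σ_inv, σ_inv, ← ha, ← hb]
  group

lemma σ_comm (m x y : ℕ) (h : x + 2 ≤ y) : σ m x * σ m y = σ m y * σ m x := by
  by_cases hy : y ≤ m
  · set a := σ m x with ha
    set b := σ m y with hb
    have h2 : (a * b) ^ 2 = 1 := by
      rw [ha, hb]
      unfold σ
      rw [dif_pos (by omega : x ≤ m), dif_pos hy]
      have := simple_pow (m+1) ⟨x, by omega⟩ ⟨y, by omega⟩
      rwa [A_apply, if_neg (by simp [Fin.ext_iff]; omega), if_neg (by simp; omega)] at this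
    have key : (a * b) * (a * b) = 1 := by rw [← pow_two]; exact h2
    have h4 := inv_eq_of_mul_eq_one_right key
    calc a * b = ((a*b)⁻¹)⁻¹ := by rw [inv_inv]
    _ = (a*b)⁻¹ := by conv_lhs => rw [h4]
    _ = b * a := by rw [mul_inv_rev, hb, ha, σ_inv, σ_inv]
  · have : σ m y = 1 := by unfold σ; rw [dif_neg hy]
    rw [this, one_mul, mul_one]

/-- The descending products `s_m s_{m-1} ⋯ s_{m-k+1}`. -/
def t (m : ℕ) : ℕ → (Aₙ (m+1)).Group
  | 0 => 1
  | k+1 => t m k * σ m (m - k)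

lemma σ_comm_t (m : ℕ) (x : ℕ) : ∀ k : ℕ, x + k + 1 ≤ m → σ m x * t m k = t m k * σ m x := by
  intro k
  induction k with
  | zero => intro _; simp [t]
  | succ j ih =>
    intro h
    have h1 : x + j + 1 ≤ m := by omega
    have h2 : x + 2 ≤ m - j := by omega
    rw [t, ← mul_assoc, ih h1, mul_assoc, σ_comm m x (m-j) h2, mul_assoc]

lemma t_mul_σ (m : ℕ) : ∀ k x : ℕ, k ≤ m + 1 → m + 2 ≤ x + k → x ≤ m →
    t m k * σ m x = σ m (x-1) * t m k := by
  intro k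
  induction k using Nat.strong_induction_on with
  | _ k ih =>
    intro x hk h1 h2
    match k, hk, h1 with
    | 0, _, h1 => exact (by omega : False).elim
    | 1, _, h1 => exact (by omega : False).elim
    | (j+2), hk, h1 =>
      by_cases hbd : m + 2 ≤ x + (j+1)
      · have hcomm : σ m (m - (j+1)) * σ m x = σ m x * σ m (m - (j+1)) := by
          rw [σ_comm m (m - (j+1)) x (by omega)]
        rw [t, mul_assoc, hcomm, ← mul_assoc, ih (j+1) (by omega) x (by omega) hbd h2,
          mul_assoc]
      · have hx : x = m - j := by omega
        have hj : j + 1 ≤ m := by omega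
        have e1 : m - (j+1) = (m - j) - 1 := by omega
        have e2 : (m - j) - 1 + 1 = m - j := by omega
        subst hx
        rw [t, t, e1, mul_assoc, mul_assoc]
        have hb : σ m ((m-j)-1) * σ m (m - j) * σ m ((m-j)-1)
            = σ m (m-j) * σ m ((m-j)-1) * σ m (m-j) := by
          have := σ_braid m ((m-j)-1) (by omega)
          rwa [e2] at this
        have : σ m (m - j) * (σ m ((m-j)-1) * σ m (m - j))
            = σ m ((m-j)-1) * (σ m (m-j) * σ m ((m-j)-1)) := by
          calc σ m (m - j) * (σ m ((m-j)-1) * σ m (m - j))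
              = σ m (m-j) * σ m ((m-j)-1) * σ m (m-j) := by rw [mul_assoc]
            _ = σ m ((m-j)-1) * σ m (m - j) * σ m ((m-j)-1) := hb.symm
            _ = σ m ((m-j)-1) * (σ m (m-j) * σ m ((m-j)-1)) := by rw [mul_assoc]
        rw [this, ← mul_assoc, ← σ_comm_t m ((m-j)-1) j (by omega)]
        rw [mul_assoc, mul_assoc]

/-- The inclusion of the type-A Coxeter group of rank `m` into that of rank `m+1`. -/
def up (m : ℕ) : (Aₙ m).Group →* (Aₙ (m+1)).Group :=
  (cs m).lift ⟨fun i => σ m (i : ℕ), by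
    intro i j
    unfold σ
    dsimp only
    rw [dif_pos (by omega : (i:ℕ) ≤ m), dif_pos (by omega : (j:ℕ) ≤ m)]
    have := simple_pow (m+1) ⟨i, by omega⟩ ⟨j, by omega⟩
    rwa [show ((Aₙ (m+1)) ⟨i, by omega⟩ ⟨j, by omega⟩) = (Aₙ m) i j by
      rw [A_apply, A_apply]; simp only [Fin.ext_iff]] at this⟩

lemma up_simple (m : ℕ) (i : Fin m) : up m ((Aₙ m).simple i) = σ m (i : ℕ) := by
  rw [← cs_simple, up]
  apply lift_apply_simple

lemma decomp (m : ℕ) (w : (Aₙ (m+1)).Group) :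
    ∃ (g : (Aₙ m).Group) (k : ℕ), k ≤ m + 1 ∧ w = up m g * t m k := by
  refine (cs (m+1)).simple_induction_right
    (p := fun w => ∃ (g : (Aₙ m).Group) (k : ℕ), k ≤ m + 1 ∧ w = up m g * t m k)
    w ⟨1, 0, by omega, by simp [t]⟩ ?_
  rintro w i ⟨g, k, hk, rfl⟩
  have hi : (i : ℕ) ≤ m := by omega
  have hs : (cs (m+1)).simple i = σ m (i : ℕ) := by
    rw [cs_simple]
    unfold σ
    rw [dif_pos hi]
  rw [hs]
  rcases lt_or_ge ((i:ℕ) + k + 1) (m+1) with hc | hc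
  · have hcomm := σ_comm_t m (i : ℕ) k (by omega)
    have hlt : (i : ℕ) < m := by omega
    refine ⟨g * (Aₙ m).simple ⟨i, hlt⟩, k, hk, ?_⟩
    rw [map_mul, up_simple, mul_assoc, ← hcomm, mul_assoc]
  · rcases Nat.lt_or_ge ((i:ℕ) + k) (m+1) with hc2 | hc2
    · have he : (i : ℕ) = m - k := by omega
      refine ⟨g, k+1, by omega, ?_⟩
      rw [t, he, mul_assoc]
    · rcases Nat.eq_or_lt_of_le hc2 with hc3 | hc3
      · obtain ⟨k', rfl⟩ : ∃ k', k = k' + 1 := ⟨k - 1, by omega⟩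
        refine ⟨g, k', by omega, ?_⟩
        have he : m - k' = (i : ℕ) := by omega
        rw [t, he, mul_assoc, mul_assoc, σ_sq, mul_one]
      · have hmv := t_mul_σ m k (i:ℕ) hk (by omega) hi
        have hlt : (i : ℕ) - 1 < m := by omega
        refine ⟨g * (Aₙ m).simple ⟨(i:ℕ) - 1, hlt⟩, k, hk, ?_⟩
        rw [map_mul, up_simple, mul_assoc, hmv, ← mul_assoc]

lemma card_bound : ∀ m : ℕ, Finite (Aₙ m).Group ∧ Nat.card (Aₙ m).Group ≤ Nat.factorial (m+1) := by
  intro m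
  induction m with
  | zero =>
    have hsub : Subsingleton (Aₙ 0).Group := by
      constructor
      intro a b
      have h1 : ∀ w : (Aₙ 0).Group, w = 1 := fun w =>
        (cs 0).simple_induction (p := fun w => w = 1) w (fun i => i.elim0) rfl
          (fun _ _ h h' => by rw [h, h', mul_one])
      rw [h1 a, h1 b]
    refine ⟨@Finite.of_subsingleton _ hsub, ?_⟩
    have : Nat.card (Aₙ 0).Group = 1 := @Nat.card_of_subsingleton _ 1 hsub
    simp [this, Nat.factorial]
  | succ m ih =>
    obtain ⟨hfin, hcard⟩ := ih
    set f : (Aₙ m).Group × Fin (m+2) → (Aₙ (m+1)).Group :=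
      fun p => up m p.1 * t m (p.2 : ℕ) with hf
    have hsurj : Surjective f := by
      intro w
      obtain ⟨g, k, hk, rfl⟩ := decomp m w
      exact ⟨(g, ⟨k, by omega⟩), rfl⟩
    have : Finite ((Aₙ m).Group × Fin (m+2)) := by infer_instance
    refine ⟨Finite.of_surjective f hsurj, ?_⟩
    calc Nat.card (Aₙ (m+1)).Group ≤ Nat.card ((Aₙ m).Group × Fin (m+2)) :=
          Nat.card_le_card_of_surjective f hsurj
      _ = Nat.card (Aₙ m).Group * (m+2) := by simp [Nat.card_prod]
      _ ≤ Nat.factorial (m+1) * (m+2) := Nat.mul_le_mul_right _ hcard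
      _ = Nat.factorial (m+2) := by rw [mul_comm]; exact (Nat.factorial_succ (m+1)).symm

lemma swap_cube {α : Type*} [DecidableEq α] [Fintype α] {a b c : α} (hab : a ≠ b) (hbc : b ≠ c)
    (hac : a ≠ c) : (Equiv.swap a b * Equiv.swap b c) ^ 3 = 1 := by
  have h3 : Equiv.Perm.IsThreeCycle (Equiv.swap b a * Equiv.swap b c) :=
    Equiv.Perm.isThreeCycle_swap_mul_swap_same (Ne.symm hab) hbc hac
  have ho := h3.orderOf
  have h1 : (Equiv.swap b a * Equiv.swap b c) ^ 3 = 1 := by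
    rw [← ho]; exact pow_orderOf_eq_one _
  rwa [Equiv.swap_comm b a] at h1

lemma cube_comm {G : Type*} [Group G] {g h : G} (h3 : (g * h) ^ 3 = 1) : (h * g) ^ 3 = 1 := by
  have e : h * g = h * (g * h) * h⁻¹ := by group
  rw [e, conj_pow, h3, mul_one, mul_inv_cancel]

lemma swap_comm_sq {α : Type*} [DecidableEq α] {a b c d : α}
    (hca : c ≠ a) (hcb : c ≠ b) (hda : d ≠ a) (hdb : d ≠ b) :
    (Equiv.swap a b * Equiv.swap c d) ^ 2 = 1 := by
  have hdisj : (Equiv.swap a b).Disjoint (Equiv.swap c d) := by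
    intro x
    by_cases hx : x = a ∨ x = b
    · right
      rcases hx with rfl | rfl
      · exact Equiv.swap_apply_of_ne_of_ne (Ne.symm hca) (Ne.symm hda)
      · exact Equiv.swap_apply_of_ne_of_ne (Ne.symm hcb) (Ne.symm hdb)
    · left
      push_neg at hx
      exact Equiv.swap_apply_of_ne_of_ne hx.1 hx.2
  have hcomm : Commute (Equiv.swap a b) (Equiv.swap c d) := hdisj.commute
  rw [hcomm.mul_pow, pow_two, pow_two, Equiv.swap_mul_self, Equiv.swap_mul_self, one_mul]

lemma liftable_swap (m : ℕ) :
    CoxeterMatrix.IsLiftable (Aₙ m) (fun i : Fin m => Equiv.swap i.castSucc i.succ) := by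
  intro i j
  dsimp only
  rw [A_apply]
  rcases eq_or_ne i j with rfl | hij
  · rw [if_pos rfl, pow_one, Equiv.swap_mul_self]
  · rw [if_neg hij]
    by_cases hadj : (j : ℕ) + 1 = (i : ℕ) ∨ (i : ℕ) + 1 = (j : ℕ)
    · rw [if_pos hadj]
      rcases hadj with hj | hi
      · have e : j.succ = i.castSucc := by simp [Fin.ext_iff]; omega
        rw [show Equiv.swap i.castSucc i.succ = Equiv.swap j.succ i.succ by rw [e]]
        refine cube_comm (swap_cube (a := j.castSucc) (b := j.succ) (c := i.succ)
          (by simp [Fin.ext_iff]) (by simp [Fin.ext_iff]; omega) (by simp [Fin.ext_iff]; omega))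
      · have e : i.succ = j.castSucc := by simp [Fin.ext_iff]; omega
        rw [show Equiv.swap j.castSucc j.succ = Equiv.swap i.succ j.succ by rw [e]]
        exact swap_cube (a := i.castSucc) (b := i.succ) (c := j.succ)
          (by simp [Fin.ext_iff]) (by simp [Fin.ext_iff]; omega) (by simp [Fin.ext_iff]; omega)
    · rw [if_neg hadj]
      push_neg at hadj
      have hne : (i : ℕ) ≠ (j : ℕ) := fun hc => hij (Fin.ext hc)
      exact swap_comm_sq (by simp [Fin.ext_iff]; omega) (by simp [Fin.ext_iff]; omega)
        (by simp [Fin.ext_iff]; omega) (by simp [Fin.ext_iff]; omega)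

/-- The homomorphism to the symmetric group. -/
def toPerm (m : ℕ) : (Aₙ m).Group →* Equiv.Perm (Fin (m+1)) :=
  (cs m).lift ⟨fun i => Equiv.swap i.castSucc i.succ, liftable_swap m⟩

lemma toPerm_simple (m : ℕ) (i : Fin m) :
    toPerm m ((Aₙ m).simple i) = Equiv.swap i.castSucc i.succ := by
  rw [← cs_simple, toPerm, lift_apply_simple]

lemma toPerm_surjective (m : ℕ) : Surjective (toPerm m) := by
  have hcl := Equiv.Perm.mclosure_swap_castSucc_succ m
  rw [← MonoidHom.mrange_eq_top]
  rw [← top_le_iff, ← hcl]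
  rw [Submonoid.closure_le]
  rintro x ⟨i, rfl⟩
  exact ⟨(Aₙ m).simple i, toPerm_simple m i⟩

lemma toPerm_bijective (m : ℕ) : Bijective (toPerm m) := by
  obtain ⟨hfin, hcard⟩ := card_bound m
  rw [Nat.bijective_iff_surjective_and_card]
  refine ⟨toPerm_surjective m, le_antisymm ?_ ?_⟩
  · calc Nat.card (Aₙ m).Group ≤ Nat.factorial (m+1) := hcard
      _ = Nat.card (Equiv.Perm (Fin (m+1))) := by
          rw [Nat.card_eq_fintype_card, Fintype.card_perm, Fintype.card_fin]
  · exact Nat.card_le_card_of_surjective _ (toPerm_surjective m)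

end

end Stmt11

/-- (Coxeter presentation of the symmetric group, type `Aₙ`) Let `n ≥ 1` and let `M` be the
Coxeter matrix with `m_{ii} = 1`, `m_{ij} = 3` if `|i − j| = 1` and `m_{ij} = 2` if
`|i − j| ≥ 2`.  Then the group presented by generators `s_1, …, s_n` and relations
`(s_i s_j)^{m_{ij}} = 1` is isomorphic to the symmetric group `S_{n+1}` via the
isomorphism induced by sending `s_i` to the adjacent transposition `(i, i+1)`. -/
theorem stmt_11 (n : ℕ) (hn : 1 ≤ n) (M : CoxeterMatrix (Fin n))
    (hM : ∀ i j : Fin n, M i j =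
      if i = j then 1 else if (i : ℕ) + 1 = (j : ℕ) ∨ (j : ℕ) + 1 = (i : ℕ) then 3 else 2) :
    ∃ φ : M.Group ≃* Equiv.Perm (Fin (n + 1)),
      ∀ i : Fin n, φ (M.simple i) = Equiv.swap i.castSucc i.succ := by
  have hMA : M = CoxeterMatrix.Aₙ n := by
    ext i j
    have := hM i j
    rw [Stmt11.A_apply]
    rw [show (M.M i j) = M i j from rfl, this]
    by_cases h : i = j
    · simp [h]
    · simp only [if_neg h]
      by_cases h2 : (i : ℕ) + 1 = (j : ℕ) ∨ (j : ℕ) + 1 = (i : ℕ)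
      · rw [if_pos h2, if_pos (Or.symm h2)]
      · rw [if_neg h2, if_neg (fun hc => h2 (Or.symm hc))]
  subst hMA
  exact ⟨MulEquiv.ofBijective (Stmt11.toPerm n) (Stmt11.toPerm_bijective n),
    fun i => Stmt11.toPerm_simple n i⟩
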